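/- (Gauss–Chebyshev quadrature with equal weights.) For every integer n ≥ 1 and every real polynomial f with deg f ≤ 2n−1, one has ∫_{−1}^{1} f(x)/√(1−x²) dx = (π/n) · Σ_{i=1}^{n} f(ρ_i^{(n)}). -/

import Mathlib

open Polynomial Real MeasureTheory Set

section Aux

private lemma gc_cos_image_Ioo : Real.cos '' Ioo 0 π = Ioo (-1 : ℝ) 1 := by
  ext y
  constructor
  · rintro ⟨θ, ⟨h0, hπ⟩, rfl⟩
    constructor
    · have := Real.cos_lt_cos_of_nonneg_of_le_pi ?_ le_rfl hπ
      · simpa using this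
      · linarith
    · have := Real.cos_lt_cos_of_nonneg_of_le_pi le_rfl hπ.le h0
      simpa using this
  · rintro ⟨h1, h2⟩
    refine ⟨Real.arccos y, ⟨?_, ?_⟩, Real.cos_arccos h1.le h2.le⟩
    · exact Real.arccos_pos.2 h2
    · rcases lt_or_eq_of_le (Real.arccos_le_pi y) with h | h
      · exact h
      · exfalso
        have : Real.cos (Real.arccos y) = y := Real.cos_arccos h1.le h2.le
        rw [h, Real.cos_pi] at this
        linarith

private lemma gc_transform (g : ℝ → ℝ) :
    ∫ x in (-1 : ℝ)..1, g x / Real.sqrt (1 - x ^ 2) = ∫ θ in (0:ℝ)..π, g (Real.cos θ) := by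
  rw [intervalIntegral.integral_of_le (by norm_num : (-1:ℝ) ≤ 1),
    intervalIntegral.integral_of_le Real.pi_pos.le,
    MeasureTheory.integral_Ioc_eq_integral_Ioo, MeasureTheory.integral_Ioc_eq_integral_Ioo,
    ← gc_cos_image_Ioo,
    MeasureTheory.integral_image_eq_integral_abs_deriv_smul measurableSet_Ioo
      (f' := fun x => -Real.sin x)
      (fun x _ => (Real.hasDerivAt_cos x).hasDerivWithinAt)
      (Real.injOn_cos.mono (Ioo_subset_Icc_self))]
  refine MeasureTheory.setIntegral_congr_fun measurableSet_Ioo (fun θ hθ => ?_)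
  have hs : 0 < Real.sin θ := Real.sin_pos_of_pos_of_lt_pi hθ.1 hθ.2
  have hsq : Real.sqrt (1 - Real.cos θ ^ 2) = Real.sin θ := by
    rw [show (1 : ℝ) - Real.cos θ ^ 2 = Real.sin θ ^ 2 by
      have := Real.sin_sq_add_cos_sq θ; linarith]
    exact Real.sqrt_sq hs.le
  simp only [abs_neg, abs_of_pos hs, smul_eq_mul, hsq]
  field_simp

private lemma gc_sum_cos_eq_zero (n k : ℕ) (hn : 1 ≤ n) (hk1 : 1 ≤ k) (hk2 : k ≤ 2 * n - 1) :
    ∑ i ∈ Finset.Icc 1 n, Real.cos ((k : ℝ) * ((2 * (i : ℝ) - 1) * π / (2 * n))) = 0 := by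
  set α : ℝ := k * π / (2 * n) with hα
  have hnpos : (0:ℝ) < n := by exact_mod_cast hn
  have hα0 : 0 < α := by positivity
  have hαπ : α < π := by
    rw [hα, div_lt_iff₀ (by positivity)]
    have h2 : k < 2 * n := by omega
    have : (k : ℝ) < 2 * n := by exact_mod_cast h2
    nlinarith [Real.pi_pos]
  have hsinpos : 0 < Real.sin α := Real.sin_pos_of_pos_of_lt_pi hα0 hαπ
  have key : ∑ i ∈ Finset.range n, Real.cos ((2 * (i:ℝ) + 1) * α) = 0 := by
    have tel := Finset.sum_range_sub (fun i : ℕ => Real.sin (2 * (i:ℝ) * α)) n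
    have each : ∀ i ∈ Finset.range n,
        Real.sin (2 * ((i:ℕ)+1 : ℝ) * α) - Real.sin (2 * (i:ℝ) * α)
          = 2 * Real.sin α * Real.cos ((2 * (i:ℝ) + 1) * α) := by
      intro i _
      rw [Real.sin_sub_sin]
      ring_nf
    simp only [Nat.cast_add, Nat.cast_one] at tel
    rw [Finset.sum_congr rfl each, ← Finset.mul_sum] at tel
    have h2nα : Real.sin (2 * (n:ℝ) * α) = 0 := by
      have h1 : 2 * (n:ℝ) * α = k * π := by rw [hα]; field_simp
      rw [h1]
      exact Real.sin_nat_mul_pi k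
    rw [h2nα] at tel
    simp at tel
    rcases tel with h | h
    · exact absurd h hsinpos.ne'
    · exact h
  rw [← Finset.Ico_add_one_right_eq_Icc, Finset.sum_Ico_eq_sum_range]
  have hr : n + 1 - 1 = n := by omega
  rw [hr, ← key]
  apply Finset.sum_congr rfl
  intro i _
  push_cast
  rw [hα]
  ring_nf

private lemma gc_integral_cos_k (k : ℕ) (hk : 1 ≤ k) :
    ∫ θ in (0:ℝ)..π, Real.cos ((k:ℝ) * θ) = 0 := by
  have hk0 : (k:ℝ) ≠ 0 := by positivity
  have hd : ∀ θ ∈ Set.uIcc (0:ℝ) π, HasDerivAt (fun t => Real.sin ((k:ℝ) * t) / k)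
      (Real.cos ((k:ℝ) * θ)) θ := by
    intro θ _
    have h := (Real.hasDerivAt_sin ((k:ℝ) * θ)).comp θ ((hasDerivAt_id θ).const_mul (k:ℝ))
    have h2 := h.div_const (k:ℝ)
    simpa [mul_comm, mul_div_assoc, mul_div_cancel_left₀ _ hk0] using h2
  rw [intervalIntegral.integral_eq_sub_of_hasDerivAt hd
    ((Real.continuous_cos.comp (continuous_const.mul continuous_id)).intervalIntegrable _ _)]
  simp [Real.sin_nat_mul_pi]

private lemma gc_T_deg_coeff : ∀ k : ℕ, (Chebyshev.T ℝ ((k:ℤ)+1)).natDegree = k+1 ∧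
    (Chebyshev.T ℝ ((k:ℤ)+1)).coeff (k+1) = 2^k := by
  have C2 : (2 : ℝ[X]) = C 2 := (map_ofNat C 2).symm
  have hstep : ∀ p : ℝ[X], ∀ m : ℕ, (2 * X * p).coeff (m+1) = 2 * p.coeff m := by
    intro p m
    rw [mul_assoc, C2, coeff_C_mul, coeff_X_mul]
  have hdegbd : ∀ p : ℝ[X], (2 * X * p).natDegree ≤ p.natDegree + 1 := by
    intro p
    calc (2 * X * p).natDegree ≤ (2 * X : ℝ[X]).natDegree + p.natDegree := natDegree_mul_le
      _ ≤ 1 + p.natDegree := by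
          gcongr
          calc (2 * X : ℝ[X]).natDegree ≤ _ := natDegree_mul_le
            _ ≤ 1 := by simp
      _ = p.natDegree + 1 := by ring
  intro k
  induction k using Nat.strong_induction_on with
  | _ k ih =>
    match k with
    | 0 => constructor <;> simp
    | 1 =>
      have h2 : Chebyshev.T ℝ (((1:ℕ):ℤ)+1) = 2 * X ^ 2 - 1 := by
        rw [show ((1:ℕ):ℤ)+1 = 2 by norm_num]; exact Chebyshev.T_two ℝ
      rw [h2]
      constructor
      · compute_degree!
      · simp [coeff_sub, coeff_one]
    | (m+2) =>
      have ih1 := ih (m+1) (by omega)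
      have ih0 := ih m (by omega)
      have hrec : Chebyshev.T ℝ (((m+2:ℕ):ℤ)+1)
          = 2 * X * Chebyshev.T ℝ (((m+1:ℕ):ℤ)+1) - Chebyshev.T ℝ (((m:ℕ):ℤ)+1) := by
        rw [show ((m+2:ℕ):ℤ)+1 = ((m:ℤ)+1)+2 by push_cast; ring,
            show ((m+1:ℕ):ℤ)+1 = ((m:ℤ)+1)+1 by push_cast; ring]
        exact Chebyshev.T_add_two ℝ ((m:ℤ)+1)
      have hc : (Chebyshev.T ℝ (((m+2:ℕ):ℤ)+1)).coeff (m+2+1) = 2^(m+2) := by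
        rw [hrec, coeff_sub]
        have h0 : (Chebyshev.T ℝ (((m:ℕ):ℤ)+1)).coeff (m+2+1) = 0 := by
          apply coeff_eq_zero_of_natDegree_lt
          rw [ih0.1]; omega
        rw [h0, hstep, show m+2 = m+1+1 from rfl, ih1.2]
        ring
      have hd : (Chebyshev.T ℝ (((m+2:ℕ):ℤ)+1)).natDegree = m+2+1 := by
        apply le_antisymm
        · rw [hrec]
          apply le_trans (natDegree_sub_le _ _)
          apply max_le
          · apply le_trans (hdegbd _)
            rw [ih1.1]
          · rw [ih0.1]; omega
        · apply le_natDegree_of_ne_zero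
          rw [hc]; positivity
      exact ⟨hd, hc⟩

end Aux

/-- The `i`-th Chebyshev point of degree `n`: `ρ_i^{(n)} = cos((2i-1)π/(2n))`. -/
noncomputable def chebPt (n i : ℕ) : ℝ :=
  Real.cos ((2 * (i : ℝ) - 1) * Real.pi / (2 * (n : ℝ)))

section Aux2

private lemma gc_key_T (n k : ℕ) (hn : 1 ≤ n) (hk : k ≤ 2 * n - 1) :
    ∫ θ in (0:ℝ)..π, (Chebyshev.T ℝ (k:ℤ)).eval (Real.cos θ)
      = (π / n) * ∑ i ∈ Finset.Icc 1 n, (Chebyshev.T ℝ (k:ℤ)).eval (chebPt n i) := by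
  have hnpos : (0:ℝ) < n := by exact_mod_cast hn
  have heval : ∀ x : ℝ, (Chebyshev.T ℝ (k:ℤ)).eval (Real.cos x) = Real.cos ((k:ℝ) * x) := by
    intro x
    have := Polynomial.Chebyshev.T_real_cos x (k:ℤ)
    push_cast at this
    exact this
  have hevalP : ∀ i : ℕ, (Chebyshev.T ℝ (k:ℤ)).eval (chebPt n i)
      = Real.cos ((k:ℝ) * ((2 * (i:ℝ) - 1) * π / (2 * n))) := by
    intro i
    unfold chebPt
    exact heval _
  rcases Nat.eq_zero_or_pos k with hk0 | hk1
  · subst hk0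
    simp only [Nat.cast_zero, Chebyshev.T_zero, eval_one]
    rw [intervalIntegral.integral_const]
    simp only [smul_eq_mul, mul_one, sub_zero]
    rw [Finset.sum_const, Nat.card_Icc]
    field_simp
    simp
  · have hL : ∫ θ in (0:ℝ)..π, (Chebyshev.T ℝ (k:ℤ)).eval (Real.cos θ) = 0 := by
      rw [intervalIntegral.integral_congr (fun x _ => heval x)]
      exact gc_integral_cos_k k hk1
    have hR : ∑ i ∈ Finset.Icc 1 n, (Chebyshev.T ℝ (k:ℤ)).eval (chebPt n i) = 0 := by
      rw [Finset.sum_congr rfl (fun i _ => hevalP i)]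
      exact gc_sum_cos_eq_zero n k hn hk1 hk
    rw [hL, hR, mul_zero]

private lemma gc_main (n : ℕ) (hn : 1 ≤ n) :
    ∀ d : ℕ, d ≤ 2 * n - 1 → ∀ f : ℝ[X], f.natDegree ≤ d →
      ∫ θ in (0:ℝ)..π, f.eval (Real.cos θ)
        = (π / n) * ∑ i ∈ Finset.Icc 1 n, f.eval (chebPt n i) := by
  intro d
  induction d with
  | zero =>
    intro _ f hf
    obtain ⟨a, rfl⟩ := Polynomial.natDegree_eq_zero.mp (Nat.le_zero.mp hf)
    have h0 := gc_key_T n 0 hn (by omega)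
    simp only [Nat.cast_zero, Chebyshev.T_zero, eval_one] at h0
    simp only [eval_C]
    rw [intervalIntegral.integral_const, Finset.sum_const, Nat.card_Icc] at h0 ⊢
    simp only [smul_eq_mul, nsmul_eq_mul] at h0 ⊢
    have hnpos : (0:ℝ) < n := by exact_mod_cast hn
    field_simp at h0 ⊢
    simp only [Nat.add_sub_cancel] at h0 ⊢
    nlinarith [h0]
  | succ d IH =>
    intro hd f hf
    rcases Nat.lt_or_ge f.natDegree (d+1) with hlt | hge
    · exact IH (by omega) f (by omega)
    -- f has natDegree = d+1
    obtain ⟨hTdeg, hTcoeff⟩ := gc_T_deg_coeff d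
    set Td : ℝ[X] := Chebyshev.T ℝ ((d:ℤ)+1) with hTd
    set a : ℝ := f.coeff (d+1) / 2^d with ha
    set g : ℝ[X] := f - C a * Td with hg
    have hgd : g.natDegree ≤ d := by
      apply Polynomial.natDegree_le_iff_coeff_eq_zero.mpr
      intro m hm
      rcases Nat.lt_or_ge (d+1) m with hm2 | hm2
      · rw [hg, coeff_sub, coeff_C_mul]
        rw [coeff_eq_zero_of_natDegree_lt (lt_of_le_of_lt hf hm2),
          coeff_eq_zero_of_natDegree_lt (by rw [hTdeg]; exact hm2)]
        ring
      · have hm3 : m = d+1 := by omega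
        subst hm3
        rw [hg, coeff_sub, coeff_C_mul, hTcoeff, ha]
        field_simp
        ring
    have hfeq : f = g + C a * Td := by rw [hg]; ring
    have hcontg : Continuous fun θ : ℝ => g.eval (Real.cos θ) :=
      (Polynomial.continuous g).comp Real.continuous_cos
    have hcontT : Continuous fun θ : ℝ => Td.eval (Real.cos θ) :=
      (Polynomial.continuous Td).comp Real.continuous_cos
    have hkey := gc_key_T n (d+1) hn (by omega)
    have hcast : ((d+1 : ℕ) : ℤ) = (d:ℤ)+1 := by push_cast; ring
    rw [hcast] at hkey
    have hIH := IH (by omega) g hgd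
    rw [hfeq]
    simp only [eval_add, eval_mul, eval_C]
    rw [intervalIntegral.integral_add (hcontg.intervalIntegrable _ _)
      (by exact (continuous_const.mul hcontT).intervalIntegrable _ _ :
        IntervalIntegrable (fun θ => a * Td.eval (Real.cos θ)) volume 0 π)]
    rw [intervalIntegral.integral_const_mul]
    rw [Finset.sum_add_distrib, ← Finset.mul_sum]
    rw [hIH, hTd, hkey]
    ring

end Aux2

/-- Gauss–Chebyshev quadrature with equal weights: for `n ≥ 1` and every real polynomial `f`
with `deg f ≤ 2n - 1`,
`∫_{-1}^{1} f(x)/√(1-x²) dx = (π/n) ∑_{i=1}^{n} f(ρ_i^{(n)})`. -/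
theorem stmt_5 (n : ℕ) (hn : 1 ≤ n) (f : Polynomial ℝ) (hf : f.natDegree ≤ 2 * n - 1) :
    ∫ x in (-1 : ℝ)..1, f.eval x / Real.sqrt (1 - x ^ 2) =
      (Real.pi / n) * ∑ i ∈ Finset.Icc 1 n, f.eval (chebPt n i) := by
  rw [gc_transform (fun x => f.eval x)]
  exact gc_main n hn (2*n-1) le_rfl f hf
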